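/- In the setting of the uniqueness criterion, the contribution of the open stratum satisfies c̃(T, Y) = ∑_{I ⊆ J} (-1)^{|I|} ι_{I*}(c̃(D_I)), where c̃(D_I) ∈ A(D_I) is the total class of the complete smooth variety D_I and ι_I : D_I → Y the (proper) inclusion. Consequently c̃(T, Y) depends only on the values of c̃ on the complete smooth varieties D_I. -/
import Mathlib


/-- In the setting of the uniqueness criterion, the contribution of the open stratum
`T = D_∅°` satisfies `c̃(T,Y) = ∑_{I ⊆ J} (-1)^{|I|} ι_{I*}(c̃(D_I))`, where `c̃(D_I)` is
the total class of the complete smooth variety `D_I = ⋂_{j ∈ I} D j` and `ι_I : D_I → Y`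
is the inclusion; thus `c̃(T,Y)` depends only on the values of `c̃` on the `D_I`. -/
theorem open_stratum_alternating_sum
    (A : Type → Type) [∀ X, AddCommGroup (A X)]
    (push : ∀ {X' Y' : Type}, (X' → Y') → (A X' →+ A Y'))
    (Y : Type) {J : Type} [Fintype J] [DecidableEq J] (D : J → Set Y)
    (ct : ∀ X : Type, Set X → A X)
    (ctTot : ∀ X : Type, A X)
    -- local determination along the inclusions `ι_I : D_I → Y` for `K ⊇ I`
    (hloc : ∀ I K : Finset J, I ⊆ K →
      ct Y {y | ∀ j, y ∈ D j ↔ j ∈ K}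
        = push (Subtype.val : {y : Y // ∀ j ∈ I, y ∈ D j} → Y)
            (ct {y : Y // ∀ j ∈ I, y ∈ D j}
              (Subtype.val ⁻¹' ({y | ∀ j, y ∈ D j ↔ j ∈ K} : Set Y))))
    -- the total class of `D_I` is the sum of the contributions of its strata `D_K°`
    (htot : ∀ I : Finset J,
      ctTot {y : Y // ∀ j ∈ I, y ∈ D j}
        = ∑ K ∈ Finset.univ.filter (fun K : Finset J => I ⊆ K),
            ct {y : Y // ∀ j ∈ I, y ∈ D j}
              (Subtype.val ⁻¹' ({y | ∀ j, y ∈ D j ↔ j ∈ K} : Set Y))) :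
    ct Y {y | ∀ j, y ∈ D j ↔ j ∈ (∅ : Finset J)}
      = ∑ I : Finset J, (-1 : ℤ) ^ I.card •
          push (Subtype.val : {y : Y // ∀ j ∈ I, y ∈ D j} → Y)
            (ctTot {y : Y // ∀ j ∈ I, y ∈ D j}) := by
  have step : ∀ I : Finset J,
      push (Subtype.val : {y : Y // ∀ j ∈ I, y ∈ D j} → Y)
          (ctTot {y : Y // ∀ j ∈ I, y ∈ D j})
        = ∑ K ∈ Finset.univ.filter (fun K : Finset J => I ⊆ K),
            ct Y {y | ∀ j, y ∈ D j ↔ j ∈ K} := by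
    intro I
    rw [htot I, map_sum]
    exact Finset.sum_congr rfl fun K hK =>
      (hloc I K (Finset.mem_filter.mp hK).2).symm
  calc ct Y {y | ∀ j, y ∈ D j ↔ j ∈ (∅ : Finset J)}
      = ∑ K : Finset J,
          (if K = ∅ then (1 : ℤ) else 0) • ct Y {y | ∀ j, y ∈ D j ↔ j ∈ K} := by
        rw [Finset.sum_eq_single (∅ : Finset J)]
        · simp
        · intro K _ hK; simp [hK]
        · simp
    _ = ∑ K : Finset J,
          (∑ I ∈ K.powerset, (-1 : ℤ) ^ I.card) • ct Y {y | ∀ j, y ∈ D j ↔ j ∈ K} := by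
        simp_rw [Finset.sum_powerset_neg_one_pow_card]
    _ = ∑ K : Finset J, ∑ I ∈ K.powerset,
          (-1 : ℤ) ^ I.card • ct Y {y | ∀ j, y ∈ D j ↔ j ∈ K} := by
        simp_rw [Finset.sum_smul]
    _ = ∑ I : Finset J, ∑ K ∈ Finset.univ.filter (fun K : Finset J => I ⊆ K),
          (-1 : ℤ) ^ I.card • ct Y {y | ∀ j, y ∈ D j ↔ j ∈ K} := by
        rw [Finset.sum_comm' (s' := fun K => K.powerset)
          (t := fun I => Finset.univ.filter (fun K : Finset J => I ⊆ K))]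
        intro I K
        simp [Finset.mem_powerset]
    _ = ∑ I : Finset J, (-1 : ℤ) ^ I.card •
          push (Subtype.val : {y : Y // ∀ j ∈ I, y ∈ D j} → Y)
            (ctTot {y : Y // ∀ j ∈ I, y ∈ D j}) := by
        refine Finset.sum_congr rfl fun I _ => ?_
        rw [step I, Finset.smul_sum]
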